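/- If a sequence S_1 = 1, and S_n = 2S_{n-1} + S_{n-2} + ··· + S_1 for n ≥ 2, then S_n = F_{2n-1} for all n ≥ 1, where F is the Fibonacci sequence with F_1 = F_2 = 1. -/
import Mathlib


/-- If `S_1 = 1` and `S_n = 2S_{n-1} + S_{n-2} + ⋯ + S_1` for `n ≥ 2`, then `S_n = F_{2n-1}`
for all `n ≥ 1`, where `F` is the Fibonacci sequence with `F_1 = F_2 = 1`. -/
theorem recurrence_gives_odd_fib (S : ℕ → ℕ) (h1 : S 1 = 1)
    (hrec : ∀ n, 2 ≤ n → S n = 2 * S (n - 1) + ∑ j ∈ Finset.Icc 1 (n - 2), S j) :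
    ∀ n, 1 ≤ n → S n = Nat.fib (2 * n - 1) := by
  have key : ∀ m, S (m + 1) = Nat.fib (2 * m + 1) ∧
      ∑ j ∈ Finset.Icc 1 (m + 1), S j = Nat.fib (2 * m + 2) := by
    intro m
    induction m with
    | zero => simp [h1]
    | succ m ih =>
      obtain ⟨hS, hsum⟩ := ih
      have hr := hrec (m + 2) (by omega)
      simp only [show m + 2 - 1 = m + 1 from rfl, show m + 2 - 2 = m from rfl] at hr
      have htop : ∑ j ∈ Finset.Icc 1 (m + 1), S j =
          ∑ j ∈ Finset.Icc 1 m, S j + S (m + 1) :=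
        Finset.sum_Icc_succ_top (by omega) _
      have hS2 : S (m + 2) = Nat.fib (2 * (m + 1) + 1) := by
        rw [hr]
        have : 2 * S (m + 1) + ∑ j ∈ Finset.Icc 1 m, S j =
            S (m + 1) + ∑ j ∈ Finset.Icc 1 (m + 1), S j := by
          rw [htop]; ring
        rw [this, hS, hsum]
        conv_rhs => rw [show 2 * (m + 1) + 1 = (2 * m + 1) + 2 by ring, Nat.fib_add_two]
      refine ⟨hS2, ?_⟩
      have htop2 : ∑ j ∈ Finset.Icc 1 (m + 2), S j =
          ∑ j ∈ Finset.Icc 1 (m + 1), S j + S (m + 2) :=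
        Finset.sum_Icc_succ_top (by omega) _
      rw [htop2, hsum, hS2]
      conv_rhs => rw [show 2 * (m + 1) + 2 = (2 * m + 2) + 2 by ring, Nat.fib_add_two]
      congr 1
  intro n hn
  obtain ⟨m, rfl⟩ : ∃ m, n = m + 1 := ⟨n - 1, by omega⟩
  have := (key m).1
  have h2 : 2 * (m + 1) - 1 = 2 * m + 1 := by omega
  rw [h2, this]
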